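/- Let H be a finite group and S ⊆ H a union of conjugacy classes of involutions generating H, such that every product of two elements of S lies in S ∪ {1} or has a fixed order m. If m is even, then H is a 2-group. -/

import Mathlib

open Subgroup

section Helpers
variable {G : Type*} [Group G]

private lemma BS.inv_self {s : G} (h : s * s = 1) : s⁻¹ = s :=
  inv_eq_of_mul_eq_one_right h

/-- closure of a conjugation-closed set is normal. -/
private lemma BS.normal_closure_of (E : Set G)
    (h : ∀ g : G, ∀ x ∈ E, g * x * g⁻¹ ∈ E) : (closure E).Normal := by
  constructor
  intro n hn g
  induction hn using closure_induction with
  | mem x hx => exact subset_closure (h g x hx)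
  | one => simpa using one_mem _
  | mul x y hx hy ihx ihy =>
      have : g * (x * y) * g⁻¹ = (g * x * g⁻¹) * (g * y * g⁻¹) := by group
      rw [this]; exact mul_mem ihx ihy
  | inv x hx ihx =>
      have : g * x⁻¹ * g⁻¹ = (g * x * g⁻¹)⁻¹ := by group
      rw [this]; exact inv_mem ihx

private lemma BS.closure_inter_self {S E : Set G} (hE : E ⊆ S) :
    closure (S ∩ ↑(closure E)) = closure E := by
  refine le_antisymm (closure_le _ |>.2 fun x hx => hx.2) ?_
  exact closure_mono fun x hx => ⟨hE hx, subset_closure hx⟩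

private lemma BS.closure_sdiff_one (E : Set G) :
    closure (E \ {1}) = closure E := by
  refine le_antisymm (closure_mono Set.diff_subset) ((closure_le _).2 fun x hx => ?_)
  by_cases h1 : x = 1
  · rw [h1]; exact one_mem _
  · exact subset_closure ⟨hx, h1⟩

/-- transfer of generation to a subgroup. -/
private lemma BS.subgroupOf_closure_eq {K W : Subgroup G} (E : Set G) (hEW : E ⊆ ↑W)
    (hW : closure E = W) (hWK : W ≤ K) :
    W.subgroupOf K = closure {x : ↥K | ↑x ∈ E} := by
  refine le_antisymm ?_ ((closure_le _).2 fun x hx => by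
    simpa [mem_subgroupOf] using (hW ▸ subset_closure hx : (x : G) ∈ W))
  intro x hx
  rw [mem_subgroupOf] at hx
  rw [← hW] at hx
  have main : ∀ (g : G), g ∈ closure E → ∀ (hg : g ∈ K),
      (⟨g, hg⟩ : ↥K) ∈ closure {x : ↥K | ↑x ∈ E} := by
    intro g hgcl
    induction hgcl using closure_induction with
    | mem y hy => intro hgK; exact subset_closure hy
    | one => intro h; exact one_mem _
    | mul a b ha hb iha ihb =>
        intro hab
        have haK : a ∈ K := hWK (hW ▸ ha)
        have hbK : b ∈ K := hWK (hW ▸ hb)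
        have : (⟨a * b, hab⟩ : ↥K) = ⟨a, haK⟩ * ⟨b, hbK⟩ := rfl
        rw [this]; exact mul_mem (iha haK) (ihb hbK)
    | inv a ha iha =>
        intro hai
        have haK : a ∈ K := hWK (hW ▸ ha)
        have : (⟨a⁻¹, hai⟩ : ↥K) = (⟨a, haK⟩ : ↥K)⁻¹ := rfl
        rw [this]; exact inv_mem (iha haK)
  exact main _ hx x.2

private lemma BS.closure_restrict {K : Subgroup G} (E : Set G) (hEK : E ⊆ ↑K)
    (hK : closure E = K) : closure {x : ↥K | ↑x ∈ E} = ⊤ := by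
  have := BS.subgroupOf_closure_eq (K := K) (W := K) E hEK hK le_rfl
  rw [← this]
  exact subgroupOf_self K

end Helpers

section Helpers2
variable {G : Type*} [Group G]

private lemma BS.card_lt_of_lt [Finite G] {W W' : Subgroup G} (h : W < W') :
    Nat.card ↥W < Nat.card ↥W' := by
  have h1 : (W : Set G) ⊂ (W' : Set G) := SetLike.coe_ssubset_coe.2 h
  have := Set.ncard_lt_ncard h1 (Set.toFinite _)
  rw [← Nat.card_coe_set_eq, ← Nat.card_coe_set_eq] at this
  exact this

private lemma BS.card_lt_of_ne_top [Finite G] {P : Subgroup G} (h : P ≠ ⊤) :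
    Nat.card ↥P < Nat.card G := by
  have h2 := BS.card_lt_of_lt (lt_top_iff_ne_top.2 h)
  have h3 : Nat.card ↥(⊤ : Subgroup G) = Nat.card G := Nat.card_congr Subgroup.topEquiv.toEquiv
  rwa [h3] at h2

private lemma BS.pow2_descent : ∀ (k : ℕ) (z : G), z ≠ 1 → z ^ 2 ^ k = 1 →
    ∃ d : G, d ≠ 1 ∧ d * d = 1 ∧ ∃ m : ℕ, d = z ^ m := by
  intro k
  induction k with
  | zero => intro z hz h; simp at h; exact absurd h hz
  | succ k ih =>
      intro z hz h
      by_cases hy : z ^ 2 ^ k = 1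
      · exact ih z hz hy
      · refine ⟨z ^ 2 ^ k, hy, ?_, 2 ^ k, rfl⟩
        rw [← pow_add, ← two_mul, ← pow_succ']
        exact h

private lemma BS.zpowers_dichotomy {c : G} (hc : c * c = 1) {u : G}
    (hu : u ∈ zpowers c) (hne : u ≠ 1) : u = c := by
  obtain ⟨n, rfl⟩ := mem_zpowers_iff.1 hu
  have h2 : c ^ (2 : ℤ) = 1 := by rw [zpow_two]; exact hc
  have hn : c ^ n = c ^ (n % 2) := by
    conv_lhs => rw [← Int.mul_ediv_add_emod n 2]
    rw [zpow_add, zpow_mul, h2, one_zpow, one_mul]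
  rcases Int.emod_two_eq n with h | h
  · rw [hn, h] at hne ⊢; simp at hne
  · rw [hn, h, zpow_one]

private lemma BS.normal_of_le_center {H : Subgroup G} (h : H ≤ Subgroup.center G) :
    H.Normal := by
  constructor
  intro x hx g
  have hg : g * x = x * g := ((Subgroup.mem_center_iff.1 (h hx)) g)
  have : g * x * g⁻¹ = x := by rw [hg, mul_assoc, mul_inv_cancel, mul_one]
  rwa [this]

private lemma BS.card_quotient_lt [Finite G] {N : Subgroup G} [N.Normal] (hN : N ≠ ⊥) :
    Nat.card (G ⧸ N) < Nat.card G := by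
  have heq := Subgroup.card_eq_card_quotient_mul_card_subgroup N
  have h2 : 2 ≤ Nat.card ↥N := by
    rw [Nat.succ_le_iff, Finite.one_lt_card_iff_nontrivial]
    obtain ⟨x, hxN, hx1⟩ : ∃ x ∈ N, x ≠ 1 := by
      by_contra h; push_neg at h
      exact hN ((Subgroup.eq_bot_iff_forall N).2 h)
    exact ⟨⟨x, hxN⟩, 1, by simpa using hx1⟩
  have hq : 0 < Nat.card (G ⧸ N) := Nat.card_pos
  rw [heq]
  calc Nat.card (G ⧸ N) < Nat.card (G ⧸ N) * 2 := by omega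
  _ ≤ Nat.card (G ⧸ N) * Nat.card ↥N := Nat.mul_le_mul_left _ h2

/-- dihedral bound : every element of ⟨s,t⟩ has order dividing 4. -/
private lemma BS.dihedral_pow4 {s t : G} (hs : s * s = 1) (ht : t * t = 1)
    (hst : (s * t) ^ 4 = 1) : ∀ h ∈ closure ({s, t} : Set G), h ^ 4 = 1 := by
  have hsi : s⁻¹ = s := inv_eq_of_mul_eq_one_right hs
  have hti : t⁻¹ = t := inv_eq_of_mul_eq_one_right ht
  set x := s * t with hx
  have h1 : s * x * s⁻¹ = x⁻¹ := by
    rw [hsi, hx, mul_inv_rev, hsi, hti, ← mul_assoc, hs, one_mul]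
  have hswap : ∀ j : ℤ, s * x ^ j = x ^ (-j) * s := by
    intro j
    have : s * x ^ j * s⁻¹ = x ^ (-j) := by
      rw [← conj_zpow, h1, inv_zpow]
      exact (zpow_neg x j).symm
    calc s * x ^ j = s * x ^ j * s⁻¹ * s := by rw [hsi, mul_assoc, hs, mul_one]
    _ = x ^ (-j) * s := by rw [this]
  have hx4 : x ^ ((4 : ℕ) : ℤ) = 1 := by
    rw [zpow_natCast, hst]
  have hform : ∀ h ∈ closure ({s, t} : Set G), ∃ i : ℤ, h = x ^ i ∨ h = x ^ i * s := by
    intro h hh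
    induction hh using closure_induction with
    | mem g hg =>
        rcases hg with hg | hg
        · exact ⟨0, Or.inr (by rw [hg, zpow_zero, one_mul])⟩
        · refine ⟨-1, Or.inr ?_⟩
          rw [hg, zpow_neg, zpow_one, hx, mul_inv_rev, hsi, hti, mul_assoc, hs, mul_one]
    | one => exact ⟨0, Or.inl (by rw [zpow_zero])⟩
    | mul a b ha hb iha ihb =>
        obtain ⟨i, hi | hi⟩ := iha <;> obtain ⟨j, hj | hj⟩ := ihb
        · exact ⟨i + j, Or.inl (by rw [hi, hj, zpow_add])⟩
        · exact ⟨i + j, Or.inr (by rw [hi, hj, ← mul_assoc, ← zpow_add])⟩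
        · refine ⟨i - j, Or.inr ?_⟩
          rw [hi, hj, mul_assoc, hswap j, ← mul_assoc, ← zpow_add, sub_eq_add_neg]
        · refine ⟨i - j, Or.inl ?_⟩
          rw [hi, hj, mul_assoc, ← mul_assoc s (x ^ j) s, hswap j, mul_assoc, hs, mul_one,
            ← zpow_add, sub_eq_add_neg]
    | inv a ha iha =>
        obtain ⟨i, hi | hi⟩ := iha
        · exact ⟨-i, Or.inl (by rw [hi, zpow_neg])⟩
        · refine ⟨i, Or.inr ?_⟩
          rw [hi, mul_inv_rev, hsi, ← zpow_neg, hswap, neg_neg]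
  intro h hh
  obtain ⟨i, hi | hi⟩ := hform h hh
  · rw [hi, ← zpow_natCast (x ^ i) 4, ← zpow_mul, mul_comm, zpow_mul, hx4, one_zpow]
  · have h2 : h * h = 1 := by
      rw [hi, mul_assoc, ← mul_assoc s (x ^ i) s, hswap i, mul_assoc, hs, mul_one, ← zpow_add,
        add_neg_cancel, zpow_zero]
    have h4 : h ^ 4 = (h * h) * (h * h) := by
      rw [show (4:ℕ) = 2*2 from rfl, pow_mul, pow_two, pow_two h]
    rw [h4, h2, one_mul]

end Helpers2

section CentralLemmas

universe u

/-- Lemma A: a nontrivial finite 2-group generated by an invariant z-closed set of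
involutions contains a central element of that set. -/
private lemma BS.lemA : ∀ (n : ℕ) (P : Type u) [Group P] [Finite P], Nat.card P ≤ n →
    ∀ E : Set P, IsPGroup 2 P → E.Nonempty →
    (∀ g : P, ∀ e ∈ E, g * e * g⁻¹ ∈ E) →
    (∀ e ∈ E, e * e = 1 ∧ e ≠ 1) →
    (∀ e ∈ E, ∀ f ∈ E, (e * f) ^ 2 ∈ E ∪ {1}) →
    Subgroup.closure E = ⊤ →
    ∃ z ∈ E, z ∈ Subgroup.center P := by
  intro n
  induction n with
  | zero =>
      intro P _ _ hcard
      exact absurd (Nat.le_of_lt_succ (Nat.lt_succ_of_le hcard)) (by simpa using Nat.card_pos.ne')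
  | succ n ih =>
      intro P _ _ hcard E hP2 hEne hconj hinv hzcl hgen
      by_contra hcent
      push_neg at hcent
      obtain ⟨e0, he0⟩ := hEne
      have hnt : Nontrivial P := ⟨e0, 1, (hinv e0 he0).2⟩
      have hfact : Fact (Nat.Prime 2) := ⟨Nat.prime_two⟩
      have hZnt : Nontrivial (Subgroup.center P) := hP2.center_nontrivial
      obtain ⟨z0, hz0⟩ := exists_ne (1 : Subgroup.center P)
      have hz0c : (z0 : P) ∈ Subgroup.center P := z0.2
      have hz0ne : (z0 : P) ≠ 1 := by
        intro h; exact hz0 (Subtype.ext h)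
      obtain ⟨k, hk⟩ := hP2 (z0 : P)
      obtain ⟨c, hc1, hc2, m, hcm⟩ := BS.pow2_descent k (z0 : P) hz0ne hk
      have hccen : c ∈ Subgroup.center P := by
        rw [hcm]; exact pow_mem hz0c m
      -- quotient by ⟨c⟩
      set N : Subgroup P := Subgroup.zpowers c with hN
      have hNle : N ≤ Subgroup.center P := Subgroup.zpowers_le.2 hccen
      have hNnorm : N.Normal := BS.normal_of_le_center hNle
      have hNbot : N ≠ ⊥ := by
        simp only [hN, ne_eq, Subgroup.zpowers_eq_bot]; exact hc1
      let π := QuotientGroup.mk' N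
      have hcard2 : Nat.card (P ⧸ N) ≤ n := by
        have := BS.card_quotient_lt (G := P) (N := N) hNbot
        omega
      set Ebar : Set (P ⧸ N) := (π '' E) \ {1} with hEbar
      -- Ebar nonempty
      have hker : ∀ x : P, π x = 1 ↔ x ∈ N := fun x => QuotientGroup.eq_one_iff x
      have hEer : ∀ e ∈ E, π e ≠ 1 := by
        intro e he h1
        have : e ∈ N := (hker e).1 h1
        have := BS.zpowers_dichotomy hc2 this (hinv e he).2
        exact hcent c (this ▸ he) hccen
      have hEbarne : Ebar.Nonempty := ⟨π e0, ⟨e0, he0, rfl⟩, hEer e0 he0⟩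
      have hsurj := QuotientGroup.mk'_surjective N
      -- hypotheses for quotient
      have hconj' : ∀ g : P ⧸ N, ∀ e ∈ Ebar, g * e * g⁻¹ ∈ Ebar := by
        rintro g e ⟨⟨x, hx, rfl⟩, hne1⟩
        obtain ⟨h, rfl⟩ := hsurj g
        have heq : (QuotientGroup.mk' N) h * π x * ((QuotientGroup.mk' N) h)⁻¹
            = π (h * x * h⁻¹) := by rw [map_mul, map_mul, map_inv]
        rw [heq]
        refine ⟨⟨h * x * h⁻¹, hconj h x hx, rfl⟩, ?_⟩
        intro hc0
        apply hne1
        have h1 : π (h * x * h⁻¹) = 1 := hc0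
        rw [← heq, conj_eq_one_iff] at h1
        rw [Set.mem_singleton_iff]
        exact h1
      have hinv' : ∀ e ∈ Ebar, e * e = 1 ∧ e ≠ 1 := by
        rintro e ⟨⟨x, hx, rfl⟩, hne1⟩
        exact ⟨by rw [← map_mul, (hinv x hx).1, map_one], hne1⟩
      have hzcl' : ∀ e ∈ Ebar, ∀ f ∈ Ebar, (e * f) ^ 2 ∈ Ebar ∪ {1} := by
        rintro e ⟨⟨x, hx, rfl⟩, -⟩ f ⟨⟨y, hy, rfl⟩, -⟩
        have : (π x * π y) ^ 2 = π ((x * y) ^ 2) := by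
          rw [map_pow, map_mul]
        rw [this]
        rcases hzcl x hx y hy with h | h
        · by_cases h1 : π ((x * y) ^ 2) = 1
          · exact Or.inr h1
          · exact Or.inl ⟨⟨(x * y) ^ 2, h, rfl⟩, h1⟩
        · rw [Set.mem_singleton_iff] at h
          rw [h, map_one]
          exact Or.inr rfl
      have hgen' : Subgroup.closure Ebar = ⊤ := by
        rw [hEbar, BS.closure_sdiff_one, ← MonoidHom.map_closure, hgen]
        exact Subgroup.map_top_of_surjective _ hsurj
      have hQ2 : IsPGroup 2 (P ⧸ N) := hP2.to_quotient N
      obtain ⟨zb, hzbE, hzbc⟩ := ih (P ⧸ N) hcard2 Ebar hQ2 hEbarne hconj' hinv' hzcl' hgen'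
      obtain ⟨⟨e, heE, rfl⟩, -⟩ := hzbE
      -- e is not central, find noncommuting t in E
      have hnotc : e ∉ Subgroup.center P := fun h => hcent e heE h
      have : ∃ t ∈ E, ¬ Commute t e := by
        by_contra h; push_neg at h
        refine hnotc (Subgroup.mem_center_iff.2 fun g => ?_)
        have hmem : g ∈ Subgroup.closure E := hgen ▸ Subgroup.mem_top g
        induction hmem using Subgroup.closure_induction with
        | mem y hy => exact h y hy
        | one => simp
        | mul a b ha hb iha ihb => exact (Commute.mul_left iha ihb :)
        | inv a ha iha => exact (Commute.inv_left iha :)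
      obtain ⟨t, htE, htne⟩ := this
      -- t e t⁻¹ e⁻¹ ∈ N
      have hcomm : π (t * e * t⁻¹ * e⁻¹) = 1 := by
        have hcen := Subgroup.mem_center_iff.1 hzbc (π t)
        rw [map_mul, map_mul, map_mul, map_inv, map_inv, hcen]
        group
      have humem : t * e * t⁻¹ * e⁻¹ ∈ N := (hker _).1 hcomm
      have hune : t * e * t⁻¹ * e⁻¹ ≠ 1 := by
        intro h
        apply htne
        have : t * e = e * t := by
          have := congrArg (· * e * t) h
          simpa [mul_assoc, (hinv e heE).1, (hinv t htE).1] using this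
        exact this
      have huc : t * e * t⁻¹ * e⁻¹ = c := BS.zpowers_dichotomy hc2 humem hune
      have h2 : (t * e) ^ 2 = c := by
        rw [← huc, BS.inv_self (hinv t htE).1, BS.inv_self (hinv e heE).1]
        rw [pow_two]; group
      rcases hzcl t htE e heE with h | h
      · rw [h2] at h; exact hcent c h hccen
      · rw [Set.mem_singleton_iff, h2] at h; exact hc1 h

end CentralLemmas

/-- Lemma B: E-normalizer growth in finite 2-groups. -/
private lemma BS.lemB : ∀ (n : ℕ) (P : Type u) [Group P] [Finite P], Nat.card P ≤ n →
    ∀ (E : Set P) (W : Subgroup P), IsPGroup 2 P → E.Nonempty →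
    (∀ g : P, ∀ e ∈ E, g * e * g⁻¹ ∈ E) →
    (∀ e ∈ E, e * e = 1 ∧ e ≠ 1) →
    (∀ e ∈ E, ∀ f ∈ E, (e * f) ^ 2 ∈ E ∪ {1}) →
    Subgroup.closure E = ⊤ →
    W = Subgroup.closure (E ∩ ↑W) → W ≠ ⊤ →
    ∃ t ∈ E, t ∈ Subgroup.normalizer (W : Set P) ∧ t ∉ W := by
  intro n
  induction n with
  | zero =>
      intro P _ _ hcard
      exact absurd (Nat.le_of_lt_succ (Nat.lt_succ_of_le hcard)) (by simpa using Nat.card_pos.ne')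
  | succ n ih =>
      intro P _ _ hcard E W hP2 hEne hconj hinv hzcl hgen hWcl hWtop
      obtain ⟨z, hzE, hzc⟩ := BS.lemA (Nat.card P) P le_rfl E hP2 hEne hconj hinv hzcl hgen
      by_cases hzW : z ∈ W
      · -- quotient by ⟨z⟩
        set N : Subgroup P := Subgroup.zpowers z with hN
        have hNle : N ≤ Subgroup.center P := Subgroup.zpowers_le.2 hzc
        have hNnorm : N.Normal := BS.normal_of_le_center hNle
        have hNbot : N ≠ ⊥ := by
          simp only [hN, ne_eq, Subgroup.zpowers_eq_bot]; exact (hinv z hzE).2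
        have hNW : N ≤ W := Subgroup.zpowers_le.2 hzW
        let π := QuotientGroup.mk' N
        have hsurj : Function.Surjective π := QuotientGroup.mk'_surjective N
        have hker : (QuotientGroup.mk' N).ker = N := QuotientGroup.ker_mk' N
        have hcard2 : Nat.card (P ⧸ N) ≤ n := by
          have := BS.card_quotient_lt (G := P) (N := N) hNbot
          omega
        set Ebar : Set (P ⧸ N) := (π '' E) \ {1} with hEbar
        set Wbar : Subgroup (P ⧸ N) := W.map π with hWbar
        have hcomapW : Subgroup.comap π Wbar = W := by
          rw [hWbar, Subgroup.comap_map_eq, hker, sup_eq_left.2 hNW]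
        -- hypotheses
        have hEbarne : Ebar.Nonempty := by
          by_contra hempty
          rw [Set.not_nonempty_iff_eq_empty] at hempty
          have hsub : ∀ e ∈ E, e ∈ N := by
            intro e he
            by_contra heN
            have : π e ∈ Ebar := ⟨⟨e, he, rfl⟩, by
              intro h1; exact heN ((QuotientGroup.eq_one_iff e).1 h1)⟩
            rw [hempty] at this; exact this
          have htop : (⊤ : Subgroup P) ≤ N := by
            rw [← hgen]; exact (Subgroup.closure_le _).2 hsub
          apply hWtop
          have : N ≤ W := hNW
          exact top_le_iff.1 (fun x _ => this (htop trivial))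
        have hconj' : ∀ g : P ⧸ N, ∀ e ∈ Ebar, g * e * g⁻¹ ∈ Ebar := by
          rintro g e ⟨⟨x, hx, rfl⟩, hne1⟩
          obtain ⟨h, rfl⟩ := hsurj g
          have heq : π h * π x * (π h)⁻¹ = π (h * x * h⁻¹) := by
            rw [map_mul, map_mul, map_inv]
          rw [heq]
          refine ⟨⟨h * x * h⁻¹, hconj h x hx, rfl⟩, ?_⟩
          intro hc0
          apply hne1
          have h1 : π (h * x * h⁻¹) = 1 := hc0
          rw [← heq, conj_eq_one_iff] at h1
          rw [Set.mem_singleton_iff]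
          exact h1
        have hinv' : ∀ e ∈ Ebar, e * e = 1 ∧ e ≠ 1 := by
          rintro e ⟨⟨x, hx, rfl⟩, hne1⟩
          exact ⟨by rw [← map_mul, (hinv x hx).1, map_one], hne1⟩
        have hzcl' : ∀ e ∈ Ebar, ∀ f ∈ Ebar, (e * f) ^ 2 ∈ Ebar ∪ {1} := by
          rintro e ⟨⟨x, hx, rfl⟩, -⟩ f ⟨⟨y, hy, rfl⟩, -⟩
          have heq2 : (π x * π y) ^ 2 = π ((x * y) ^ 2) := by rw [map_pow, map_mul]
          rw [heq2]
          rcases hzcl x hx y hy with h | h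
          · by_cases h1 : π ((x * y) ^ 2) = 1
            · exact Or.inr h1
            · exact Or.inl ⟨⟨(x * y) ^ 2, h, rfl⟩, h1⟩
          · rw [Set.mem_singleton_iff] at h
            rw [h, map_one]; exact Or.inr rfl
        have hgen' : Subgroup.closure Ebar = ⊤ := by
          rw [hEbar, BS.closure_sdiff_one, ← MonoidHom.map_closure, hgen]
          exact Subgroup.map_top_of_surjective _ hsurj
        have hWbarcl : Wbar = Subgroup.closure (Ebar ∩ ↑Wbar) := by
          have h1 : Wbar = Subgroup.closure (π '' (E ∩ ↑W)) := by
            rw [hWbar]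
            conv_lhs => rw [hWcl]
            exact MonoidHom.map_closure _ _
          refine le_antisymm ?_ ((Subgroup.closure_le _).2 fun x hx => hx.2)
          conv_lhs => rw [h1, ← BS.closure_sdiff_one (π '' (E ∩ ↑W))]
          apply Subgroup.closure_mono
          rintro q ⟨⟨x, ⟨hxE, hxW⟩, rfl⟩, hq1⟩
          exact ⟨⟨⟨x, hxE, rfl⟩, hq1⟩, Subgroup.mem_map.2 ⟨x, hxW, rfl⟩⟩
        have hWbartop : Wbar ≠ ⊤ := by
          intro h
          apply hWtop
          rw [← hcomapW, h, Subgroup.comap_top]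
        obtain ⟨tb, htbE, htbN, htbW⟩ :=
          ih (P ⧸ N) hcard2 Ebar Wbar (hP2.to_quotient N) hEbarne hconj' hinv' hzcl' hgen'
            hWbarcl hWbartop
        obtain ⟨⟨t, htE, rfl⟩, -⟩ := htbE
        refine ⟨t, htE, ?_, ?_⟩
        · rw [Subgroup.mem_normalizer_iff]
          intro h
          constructor
          · intro hhW
            have : π (t * h * t⁻¹) ∈ Wbar := by
              rw [map_mul, map_mul, map_inv]
              exact (Subgroup.mem_normalizer_iff.1 htbN (π h)).1
                ⟨h, hhW, rfl⟩
            rw [← hcomapW]; exact this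
          · intro hhW
            have h2 : π (t * h * t⁻¹) ∈ Wbar := ⟨t * h * t⁻¹, hhW, rfl⟩
            rw [map_mul, map_mul, map_inv] at h2
            have h3 : π h ∈ Wbar := (Subgroup.mem_normalizer_iff.1 htbN (π h)).2 h2
            rw [← hcomapW]; exact h3
        · intro htW
          exact htbW ⟨t, htW, rfl⟩
      · -- z itself works
        refine ⟨z, hzE, ?_, hzW⟩
        rw [Subgroup.mem_normalizer_iff]
        intro h
        have hc : z * h * z⁻¹ = h := by
          rw [← Subgroup.mem_center_iff.1 hzc h, mul_assoc, mul_inv_cancel, mul_one]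
        rw [hc]

/-- Main induction: a finite group generated by a conjugation-closed set of involutions
with `(st)^4 = 1` and `(st)^2 ∈ S ∪ {1}` is a 2-group. -/
private lemma BS.key : ∀ (n : ℕ) (G : Type u) [Group G] [Finite G], Nat.card G ≤ n →
    ∀ S : Set G,
    (∀ h : G, ∀ s ∈ S, h * s * h⁻¹ ∈ S) →
    (∀ s ∈ S, s * s = 1 ∧ s ≠ 1) →
    Subgroup.closure S = ⊤ →
    (∀ s ∈ S, ∀ t ∈ S, (s * t) ^ 4 = 1 ∧ (s * t) ^ 2 ∈ S ∪ {1}) →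
    IsPGroup 2 G := by
  intro n
  induction n with
  | zero =>
      intro G _ _ hcard
      exact absurd (Nat.le_of_lt_succ (Nat.lt_succ_of_le hcard)) (by simpa using Nat.card_pos.ne')
  | succ n ih =>
      intro G _ _ hcard S hconj hinv hgen hpair
      by_contra hG
      have hfin : Finite (Subgroup G) :=
        Finite.of_injective (SetLike.coe : Subgroup G → Set G) SetLike.coe_injective
      -- S is nonempty
      have hSne : S.Nonempty := by
        rcases Set.eq_empty_or_nonempty S with h | h
        · exfalso; apply hG; intro g
          have hg : g ∈ Subgroup.closure S := hgen ▸ Subgroup.mem_top g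
          rw [h, Subgroup.closure_empty, Subgroup.mem_bot] at hg
          exact ⟨0, by rw [hg]; simp⟩
        · exact h
      -- no nontrivial normal "2-subgroup"
      have hNoNormal : ∀ V : Subgroup G, V.Normal → (∀ v ∈ V, ∃ k : ℕ, v ^ 2 ^ k = 1) →
          V ≠ ⊥ → False := by
        intro V hVN hV2 hVbot
        haveI := hVN
        let π := QuotientGroup.mk' V
        have hsurj : Function.Surjective π := QuotientGroup.mk'_surjective V
        have hcard2 : Nat.card (G ⧸ V) ≤ n := by
          have := BS.card_quotient_lt (G := G) (N := V) hVbot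
          omega
        set Sbar : Set (G ⧸ V) := (π '' S) \ {1} with hSbar
        have hconj' : ∀ g : G ⧸ V, ∀ s ∈ Sbar, g * s * g⁻¹ ∈ Sbar := by
          rintro g s ⟨⟨x, hx, rfl⟩, hne1⟩
          obtain ⟨h, rfl⟩ := hsurj g
          have heq : π h * π x * (π h)⁻¹ = π (h * x * h⁻¹) := by
            rw [map_mul, map_mul, map_inv]
          rw [heq]
          refine ⟨⟨h * x * h⁻¹, hconj h x hx, rfl⟩, ?_⟩
          intro hc0
          apply hne1
          have h1 : π (h * x * h⁻¹) = 1 := hc0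
          rw [← heq, conj_eq_one_iff] at h1
          rw [Set.mem_singleton_iff]
          exact h1
        have hinv' : ∀ s ∈ Sbar, s * s = 1 ∧ s ≠ 1 := by
          rintro s ⟨⟨x, hx, rfl⟩, hne1⟩
          exact ⟨by rw [← map_mul, (hinv x hx).1, map_one], hne1⟩
        have hgen' : Subgroup.closure Sbar = ⊤ := by
          rw [hSbar, BS.closure_sdiff_one, ← MonoidHom.map_closure, hgen]
          exact Subgroup.map_top_of_surjective _ hsurj
        have hpair' : ∀ s ∈ Sbar, ∀ t ∈ Sbar, (s * t) ^ 4 = 1 ∧ (s * t) ^ 2 ∈ Sbar ∪ {1} := by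
          rintro s ⟨⟨x, hx, rfl⟩, -⟩ t ⟨⟨y, hy, rfl⟩, -⟩
          constructor
          · rw [← map_mul, ← map_pow, (hpair x hx y hy).1, map_one]
          · rw [← map_mul, ← map_pow]
            rcases (hpair x hx y hy).2 with h | h
            · by_cases h1 : π ((x * y) ^ 2) = 1
              · exact Or.inr h1
              · exact Or.inl ⟨⟨(x * y) ^ 2, h, rfl⟩, h1⟩
            · rw [Set.mem_singleton_iff] at h
              rw [h, map_one]; exact Or.inr rfl
        have hQ2 : IsPGroup 2 (G ⧸ V) :=
          ih (G ⧸ V) hcard2 Sbar hconj' hinv' hgen' hpair'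
        apply hG
        intro g
        obtain ⟨k, hk⟩ := hQ2 (π g)
        have hgk : g ^ 2 ^ k ∈ V := by
          have : π (g ^ 2 ^ k) = 1 := by rw [map_pow, hk]
          exact (QuotientGroup.eq_one_iff _).1 this
        obtain ⟨j, hj⟩ := hV2 _ hgk
        exact ⟨k + j, by rw [pow_add, pow_mul, hj]⟩
      -- dihedral: pairs generate proper subgroups
      have hdih : ∀ s ∈ S, ∀ t ∈ S, Subgroup.closure ({s, t} : Set G) ≠ ⊤ := by
        intro s hs t ht htop
        apply hG
        intro g
        refine ⟨2, ?_⟩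
        have hg : g ∈ Subgroup.closure ({s, t} : Set G) := htop ▸ Subgroup.mem_top g
        have := BS.dihedral_pow4 (hinv s hs).1 (hinv t ht).1 (hpair s hs t ht).1 g hg
        rw [show (2:ℕ)^2 = 4 from rfl]
        exact this
      -- the family of proper S-generated subgroups
      let PredP : Subgroup G → Prop := fun P =>
        P ≠ ⊤ ∧ (S ∩ ↑P).Nonempty ∧ P = Subgroup.closure (S ∩ ↑P)
      -- every PredP subgroup consists of 2-elements
      have hPred2 : ∀ P : Subgroup G, PredP P → ∀ g ∈ P, ∃ k : ℕ, g ^ 2 ^ k = 1 := by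
        rintro P ⟨hPtop, hPne, hPcl⟩ g hg
        have hcard' : Nat.card ↥P ≤ n := by
          have := BS.card_lt_of_ne_top hPtop; omega
        set S' : Set ↥P := {x : ↥P | ↑x ∈ S} with hS'
        have hconj' : ∀ h : ↥P, ∀ s ∈ S', h * s * h⁻¹ ∈ S' := by
          intro h s hs
          show ((h * s * h⁻¹ : ↥P) : G) ∈ S
          push_cast
          exact hconj ↑h ↑s hs
        have hinv' : ∀ s ∈ S', s * s = 1 ∧ s ≠ 1 := by
          intro s hs
          refine ⟨Subtype.ext ?_, fun h => (hinv ↑s hs).2 (by rw [h]; rfl)⟩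
          push_cast
          exact (hinv ↑s hs).1
        have hgen' : Subgroup.closure S' = ⊤ := by
          have h0 := BS.closure_restrict (K := P) (S ∩ ↑P) Set.inter_subset_right hPcl.symm
          have hseteq : {x : ↥P | ↑x ∈ S ∩ ↑P} = S' := by
            ext x; simp [hS', x.2]
          rwa [hseteq] at h0
        have hpair' : ∀ s ∈ S', ∀ t ∈ S', (s * t) ^ 4 = 1 ∧ (s * t) ^ 2 ∈ S' ∪ {1} := by
          intro s hs t ht
          constructor
          · refine Subtype.ext ?_
            push_cast
            exact (hpair ↑s hs ↑t ht).1
          · rcases (hpair ↑s hs ↑t ht).2 with h | h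
            · left
              show ((((s * t) ^ 2 : ↥P)) : G) ∈ S
              push_cast
              exact h
            · right
              rw [Set.mem_singleton_iff] at h ⊢
              refine Subtype.ext ?_
              push_cast
              exact h
        have hP2' := ih ↥P hcard' S' hconj' hinv' hgen' hpair'
        obtain ⟨k, hk⟩ := hP2' ⟨g, hg⟩
        refine ⟨k, ?_⟩
        have := congrArg (Subtype.val) hk
        push_cast at this
        exact this
      -- maximal members above a given one
      let MaxP : Subgroup G → Prop := fun P => PredP P ∧ ∀ Q, PredP Q → P ≤ Q → P = Q
      have hmaxabove : ∀ V : Subgroup G, PredP V → ∃ P, MaxP P ∧ V ≤ P := by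
        intro V hV
        obtain ⟨P, hPmem, hPmax⟩ := Set.Finite.exists_maximalFor id
          {Q : Subgroup G | PredP Q ∧ V ≤ Q} (Set.toFinite _) ⟨V, hV, le_rfl⟩
        exact ⟨P, ⟨hPmem.1, fun Q hQ hPQ => le_antisymm hPQ (hPmax ⟨hQ, le_trans hPmem.2 hPQ⟩ hPQ)⟩, hPmem.2⟩
      -- singletons and pairs give PredP subgroups
      have hsingle : ∀ s ∈ S, PredP (Subgroup.closure {s}) := by
        intro s hs
        refine ⟨?_, ⟨s, hs, Subgroup.subset_closure rfl⟩,
          (BS.closure_inter_self (by simpa using hs)).symm⟩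
        have := hdih s hs s hs
        rwa [Set.pair_eq_singleton] at this
      have hpairP : ∀ s ∈ S, ∀ t ∈ S, PredP (Subgroup.closure {s, t}) := by
        intro s hs t ht
        refine ⟨hdih s hs t ht, ⟨s, hs, Subgroup.subset_closure (Or.inl rfl)⟩,
          (BS.closure_inter_self ?_).symm⟩
        rintro x (rfl | rfl)
        exacts [hs, ht]
      -- the set of "interacting pairs" of maximal members
      let T : Set (Subgroup G × Subgroup G) :=
        {PQ | MaxP PQ.1 ∧ MaxP PQ.2 ∧ PQ.1 ≠ PQ.2 ∧ (S ∩ ↑PQ.1 ∩ ↑PQ.2).Nonempty}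
      have hTne : T.Nonempty := by
        by_contra hT
        rw [Set.not_nonempty_iff_eq_empty] at hT
        obtain ⟨s0, hs0⟩ := hSne
        obtain ⟨Ps, hPs, hPsle⟩ := hmaxabove _ (hsingle s0 hs0)
        have hs0Ps : s0 ∈ Ps := hPsle (Subgroup.subset_closure rfl)
        have huniq : ∀ M, MaxP M → s0 ∈ M → M = Ps := by
          intro M hM hs0M
          by_contra hne
          have : (M, Ps) ∈ T := ⟨hM, hPs, hne, s0, ⟨hs0, hs0M⟩, hs0Ps⟩
          rw [hT] at this
          exact this
        have hconjin : ∀ g : G, g * s0 * g⁻¹ ∈ Ps := by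
          intro g
          have hsg : g * s0 * g⁻¹ ∈ S := hconj g s0 hs0
          obtain ⟨M, hM, hle⟩ := hmaxabove _ (hpairP s0 hs0 _ hsg)
          have hM' : M = Ps := huniq M hM (hle (Subgroup.subset_closure (Or.inl rfl)))
          exact hM' ▸ hle (Subgroup.subset_closure (Or.inr rfl))
        set Cset : Set G := Set.range (fun g : G => g * s0 * g⁻¹) with hCset
        have hCsetS : Cset ⊆ S := by rintro x ⟨g, rfl⟩; exact hconj g s0 hs0
        set C : Subgroup G := Subgroup.closure Cset with hC
        have hCnorm : C.Normal := by
          apply BS.normal_closure_of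
          rintro g x ⟨h, rfl⟩
          exact ⟨g * h, by group⟩
        have hCle : C ≤ Ps := by
          rw [hC]
          refine (Subgroup.closure_le _).2 ?_
          rintro x ⟨g, rfl⟩
          exact hconjin g
        have hs0C : s0 ∈ C := Subgroup.subset_closure ⟨1, by group⟩
        have hCbot : C ≠ ⊥ := by
          intro h
          rw [h, Subgroup.mem_bot] at hs0C
          exact (hinv s0 hs0).2 hs0C
        have hCP : PredP C := by
          refine ⟨?_, ⟨s0, hs0, hs0C⟩, (BS.closure_inter_self hCsetS).symm⟩
          intro h
          exact hPs.1.1 (top_le_iff.1 (h ▸ hCle))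
        exact hNoNormal C hCnorm (hPred2 C hCP) hCbot
      -- choose a pair maximizing the intersection subgroup
      obtain ⟨PQ, hPQT, hPQmax⟩ := Set.Finite.exists_maximalFor
        (fun PQ : Subgroup G × Subgroup G =>
          Nat.card ↥(Subgroup.closure (S ∩ ↑PQ.1 ∩ ↑PQ.2))) T (Set.toFinite _) hTne
      obtain ⟨P, P'⟩ := PQ
      obtain ⟨hMP, hMP', hPP', hWne⟩ := hPQT
      set W : Subgroup G := Subgroup.closure (S ∩ ↑P ∩ ↑P') with hW
      have hWleP : W ≤ P := (Subgroup.closure_le _).2 fun x hx => hx.1.2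
      have hWleP' : W ≤ P' := (Subgroup.closure_le _).2 fun x hx => hx.2
      obtain ⟨s1, hs1⟩ := hWne
      have hs1W : s1 ∈ W := Subgroup.subset_closure hs1
      have hWneP : W ≠ P := by
        intro h
        exact hPP' (hMP.2 P' hMP'.1 (h ▸ hWleP'))
      have hWneP' : W ≠ P' := by
        intro h
        exact hPP' (hMP'.2 P hMP.1 (h ▸ hWleP)).symm
      have hWbot : W ≠ ⊥ := by
        intro h
        rw [h, Subgroup.mem_bot] at hs1W
        exact (hinv s1 hs1.1.1).2 hs1W
      have hW2 : ∀ g ∈ W, ∃ k : ℕ, g ^ 2 ^ k = 1 := fun g hg =>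
        hPred2 P hMP.1 g (hWleP hg)
      have hNtop : Subgroup.normalizer (W : Set G) ≠ ⊤ := by
        intro h
        exact hNoNormal W (Subgroup.normalizer_eq_top_iff.1 h) hW2 hWbot
      -- lemma B application
      have hB : ∀ Q : Subgroup G, MaxP Q → W ≤ Q → W ≠ Q →
          ∃ t, t ∈ S ∧ t ∈ Q ∧ t ∈ Subgroup.normalizer (W : Set G) ∧ t ∉ W := by
        intro Q hMQ hWQ hWneQ
        obtain ⟨hQtop, hQne, hQcl⟩ := hMQ.1
        set E : Set ↥Q := {x : ↥Q | ↑x ∈ S} with hE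
        have hQ2 : IsPGroup 2 ↥Q := by
          intro q
          obtain ⟨k, hk⟩ := hPred2 Q hMQ.1 ↑q q.2
          refine ⟨k, Subtype.ext ?_⟩
          push_cast
          exact hk
        have hEne : E.Nonempty := by
          obtain ⟨x, hxS, hxQ⟩ := hQne
          exact ⟨⟨x, hxQ⟩, hxS⟩
        have hconjE : ∀ g : ↥Q, ∀ e ∈ E, g * e * g⁻¹ ∈ E := by
          intro g e he
          show ((g * e * g⁻¹ : ↥Q) : G) ∈ S
          push_cast
          exact hconj ↑g ↑e he
        have hinvE : ∀ e ∈ E, e * e = 1 ∧ e ≠ 1 := by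
          intro e he
          refine ⟨Subtype.ext ?_, fun h => (hinv ↑e he).2 (by rw [h]; rfl)⟩
          push_cast
          exact (hinv ↑e he).1
        have hzclE : ∀ e ∈ E, ∀ f ∈ E, (e * f) ^ 2 ∈ E ∪ {1} := by
          intro e he f hf
          rcases (hpair ↑e he ↑f hf).2 with h | h
          · left
            show ((((e * f) ^ 2 : ↥Q)) : G) ∈ S
            push_cast
            exact h
          · right
            rw [Set.mem_singleton_iff] at h ⊢
            refine Subtype.ext ?_
            push_cast
            exact h
        have hgenE : Subgroup.closure E = ⊤ := by
          have h0 := BS.closure_restrict (K := Q) (S ∩ ↑Q) Set.inter_subset_right hQcl.symm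
          have hseteq : {x : ↥Q | ↑x ∈ S ∩ ↑Q} = E := by
            ext x; simp [hE, x.2]
          rwa [hseteq] at h0
        set W' : Subgroup ↥Q := W.subgroupOf Q with hW'
        have hW'cl : W' = Subgroup.closure (E ∩ ↑W') := by
          have h1 : W' = Subgroup.closure {x : ↥Q | ↑x ∈ S ∩ ↑P ∩ ↑P'} :=
            BS.subgroupOf_closure_eq _ (fun x hx => Subgroup.subset_closure hx) hW.symm hWQ
          refine le_antisymm ?_ ((Subgroup.closure_le _).2 fun x hx => hx.2)
          conv_lhs => rw [h1]
          apply Subgroup.closure_mono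
          intro x hx
          refine ⟨hx.1.1, ?_⟩
          show x ∈ W'
          rw [hW', Subgroup.mem_subgroupOf]
          exact Subgroup.subset_closure hx
        have hW'top : W' ≠ ⊤ := by
          intro h
          rw [hW', Subgroup.subgroupOf_eq_top] at h
          exact hWneQ (le_antisymm hWQ h)
        obtain ⟨t', ht'E, ht'N, ht'W⟩ := BS.lemB (Nat.card ↥Q) ↥Q le_rfl E W' hQ2 hEne
          hconjE hinvE hzclE hgenE hW'cl hW'top
        refine ⟨↑t', ht'E, t'.2, ?_, ?_⟩
        · rw [Subgroup.mem_normalizer_iff]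
          intro h
          by_cases hhQ : h ∈ Q
          · constructor
            · intro hhW
              have hmem : (⟨h, hhQ⟩ : ↥Q) ∈ W' := Subgroup.mem_subgroupOf.2 hhW
              have h2 := (Subgroup.mem_normalizer_iff.1 ht'N ⟨h, hhQ⟩).1 hmem
              have h3 := Subgroup.mem_subgroupOf.1 h2
              push_cast at h3
              exact h3
            · intro hhW
              have hmem : (t' * ⟨h, hhQ⟩ * t'⁻¹ : ↥Q) ∈ W' := by
                rw [Subgroup.mem_subgroupOf]
                push_cast
                exact hhW
              have h2 := (Subgroup.mem_normalizer_iff.1 ht'N ⟨h, hhQ⟩).2 hmem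
              exact Subgroup.mem_subgroupOf.1 h2
          · constructor
            · intro hhW
              exact absurd (hWQ hhW) hhQ
            · intro hhW
              exfalso
              apply hhQ
              have h1 : ↑t' * h * (↑t')⁻¹ ∈ Q := hWQ hhW
              have h2 : h = (↑t')⁻¹ * (↑t' * h * (↑t')⁻¹) * ↑t' := by group
              rw [h2]
              exact mul_mem (mul_mem (inv_mem t'.2) h1) t'.2
        · intro hWmem
          exact ht'W (Subgroup.mem_subgroupOf.2 hWmem)
      obtain ⟨t, htS, htP, htN, htW⟩ := hB P hMP hWleP hWneP
      obtain ⟨t2, ht2S, ht2P', ht2N, ht2W⟩ := hB P' hMP' hWleP' hWneP'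
      -- K and P''
      set K : Subgroup G := Subgroup.closure (S ∩ ↑(Subgroup.normalizer (W : Set G))) with hK
      have hKP : PredP K := by
        refine ⟨?_, ⟨t, htS, Subgroup.subset_closure ⟨htS, htN⟩⟩, (BS.closure_inter_self Set.inter_subset_left).symm⟩
        intro h
        apply hNtop
        have : K ≤ Subgroup.normalizer (W : Set G) := (Subgroup.closure_le _).2 Set.inter_subset_right
        exact top_le_iff.1 (h ▸ this)
      obtain ⟨P'', hP''M, hKP''⟩ := hmaxabove K hKP
      have hWgensK : S ∩ ↑P ∩ ↑P' ⊆ ↑K := by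
        intro x hx
        exact Subgroup.subset_closure ⟨hx.1.1, Subgroup.le_normalizer (Subgroup.subset_closure hx)⟩
      -- final clash
      have hfinal : ∀ (Q tq : _), MaxP Q → tq ∈ S → tq ∈ Q → tq ∈ Subgroup.normalizer (W : Set G) → tq ∉ W →
          (S ∩ ↑P ∩ ↑P' ⊆ ↑Q) → Q = P'' := by
        intro Q tq hMQ htqS htqQ htqN htqW hgensQ
        by_contra hne
        have htqK : tq ∈ K := Subgroup.subset_closure ⟨htqS, htqN⟩
        have htqP'' : tq ∈ P'' := hKP'' htqK
        have hT : (Q, P'') ∈ T := ⟨hMQ, hP''M, hne, ⟨tq, ⟨htqS, htqQ⟩, htqP''⟩⟩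
        have hmono : W ≤ Subgroup.closure (S ∩ ↑Q ∩ ↑P'') := by
          rw [hW]
          apply Subgroup.closure_le _ |>.2
          intro x hx
          exact Subgroup.subset_closure ⟨⟨hx.1.1, hgensQ hx⟩, hKP'' (hWgensK hx)⟩
        have hstrict : Nat.card ↥W < Nat.card ↥(Subgroup.closure (S ∩ ↑Q ∩ ↑P'')) := by
          apply BS.card_lt_of_lt
          refine lt_of_le_of_ne hmono ?_
          intro heq
          apply htqW
          have h1 : tq ∈ Subgroup.closure (S ∩ ↑Q ∩ ↑P'') :=
            Subgroup.subset_closure ⟨⟨htqS, htqQ⟩, htqP''⟩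
          rw [← heq] at h1
          exact h1
        have heq2 := hPQmax hT (le_of_lt hstrict)
        exact absurd hstrict (not_lt.2 heq2)
      have e1 : P = P'' := hfinal P t hMP htS htP htN htW (fun x hx => hx.1.2)
      have e2 : P' = P'' := hfinal P' t2 hMP' ht2S ht2P' ht2N ht2W (fun x hx => hx.2)
      exact hPP' (e1.trans e2.symm)

/-- **Lemma 5.1 (final part, via Baer–Suzuki).** Let `H` be a finite group and
`S ⊆ H` a union of conjugacy classes of involutions generating `H`, such that every
product of two elements of `S` lies in `S ∪ {1}` or has a fixed order `m`.  If `m`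
is even, then `H` is a 2-group. -/
theorem two_group_of_even_m {H : Type*} [Group H] [Finite H]
    (S : Set H) (hconj : ∀ h : H, ∀ s ∈ S, h * s * h⁻¹ ∈ S)
    (hinvol : ∀ s ∈ S, s * s = 1 ∧ s ≠ 1)
    (hgen : Subgroup.closure S = ⊤)
    (m : ℕ)
    (horder : ∀ s ∈ S, ∀ t ∈ S, s * t ∈ S ∪ {1} ∨ orderOf (s * t) = m)
    (hm : Even m) :
    IsPGroup 2 H := by
  have hsq : ∀ u : H, u ∈ S ∪ {1} → u * u = 1 := by
    rintro u (hu | hu)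
    · exact (hinvol u hu).1
    · rw [Set.mem_singleton_iff] at hu; rw [hu, one_mul]
  have hpair : ∀ s ∈ S, ∀ t ∈ S, (s * t) ^ 4 = 1 ∧ (s * t) ^ 2 ∈ S ∪ {1} := by
    intro s hs t ht
    rcases horder s hs t ht with h | h
    · have h2 : (s * t) ^ 2 = 1 := by rw [pow_two]; exact hsq _ h
      refine ⟨?_, by rw [h2]; exact Or.inr rfl⟩
      rw [show (4 : ℕ) = 2 * 2 from rfl, pow_mul, h2, one_pow]
    · have hs' : s * t * s ∈ S := by
        have := hconj s t ht
        rwa [BS.inv_self (hinvol s hs).1] at this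
      have hx2 : (s * t) ^ 2 = (s * t * s) * t := by rw [pow_two]; group
      have h2m : 2 ∣ m := hm.two_dvd
      have hgcd : Nat.gcd m 2 = 2 := Nat.gcd_eq_right h2m
      have ho2 : orderOf ((s * t) ^ 2) = m / 2 := by
        rw [orderOf_pow, h, hgcd]
      rcases horder _ hs' t ht with h' | h'
      · have hmem : (s * t) ^ 2 ∈ S ∪ {1} := by rw [hx2]; exact h'
        have h4 : ((s * t) ^ 2) * ((s * t) ^ 2) = 1 := hsq _ hmem
        refine ⟨?_, hmem⟩
        rw [show (4 : ℕ) = 2 * 2 from rfl, pow_mul, pow_two ((s*t)^2)]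
        exact h4
      · exfalso
        rw [← hx2, ho2] at h'
        have hpos : 0 < m := h ▸ orderOf_pos (s * t)
        omega
  exact BS.key (Nat.card H) H le_rfl S hconj hinvol hgen hpair
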